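/- In E(2) with the left-invariant contact metric structure as above, let θ be a constant with sin θ cos θ < 0 and let γ be a unit-speed curve with T = cos θ X + sin θ φX, υ₂ = ξ, and υ₃ = sin θ e₁ - cos θ e₂. Then γ is a Legendre helix of osculating order 3 with constant curvatures k₁ = -cos θ sin θ c₂ and k₂ = ½(cos²θ(-c₂+2) + sin²θ(c₂+2)); in particular ∇_T υ₃ = -k₂ ξ. -/
import Mathlib


open Real RealInnerProductSpace

theorem stmt_19
    {E : Type*} [NormedAddCommGroup E] [InnerProductSpace ℝ E]
    (c2 : ℝ) (hc2 : 0 < c2)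
    (e1 e2 e3 : E)
    (h11 : ⟪e1, e1⟫ = 1) (h22 : ⟪e2, e2⟫ = 1) (h33 : ⟪e3, e3⟫ = 1)
    (h12 : ⟪e1, e2⟫ = 0) (h13 : ⟪e1, e3⟫ = 0) (h23 : ⟪e2, e3⟫ = 0)
    (nabla : E →ₗ[ℝ] E →ₗ[ℝ] E)
    (hn12 : nabla e1 e2 = ((-c2 + 2) / 2) • e3)
    (hn21 : nabla e2 e1 = (-((c2 + 2) / 2)) • e3)
    (hn13 : nabla e1 e3 = (-((-c2 + 2) / 2)) • e2)
    (hn23 : nabla e2 e3 = ((c2 + 2) / 2) • e1)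
    (hn31 : nabla e3 e1 = ((c2 - 2) / 2) • e2)
    (hn32 : nabla e3 e2 = (-((c2 - 2) / 2)) • e1)
    (hn11 : nabla e1 e1 = 0) (hn22 : nabla e2 e2 = 0) (hn33 : nabla e3 e3 = 0)
    (θ : ℝ) (hθ : Real.sin θ * Real.cos θ < 0)
    (T v3 : E)
    (hT : T = Real.cos θ • e1 + Real.sin θ • e2)
    (hv3 : v3 = Real.sin θ • e1 + (-Real.cos θ) • e2)
    (k1 k2 : ℝ)
    (hk1 : k1 = -(Real.cos θ * Real.sin θ * c2))
    (hk2 : k2 = ((Real.cos θ)^2 * (-c2 + 2) + (Real.sin θ)^2 * (c2 + 2)) / 2) :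
    ⟪T, e3⟫ = 0 ∧
    0 < k1 ∧
    nabla T T = k1 • e3 ∧
    nabla T e3 = (-k1) • T + k2 • v3 ∧
    nabla T v3 = (-k2) • e3 := by
  have pyth := Real.sin_sq_add_cos_sq θ
  refine ⟨?_, ?_, ?_, ?_, ?_⟩
  · rw [hT]; simp [inner_add_left, real_inner_smul_left, h13, h23]
  · nlinarith [hθ]
  · rw [hT, hk1]
    simp only [map_add, map_smul, LinearMap.add_apply, LinearMap.smul_apply,
      hn11, hn12, hn21, hn22, smul_zero, smul_smul]
    match_scalars <;> ring
  · rw [hT, hv3, hk1, hk2]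
    simp only [map_add, map_smul, LinearMap.add_apply, LinearMap.smul_apply,
      hn13, hn23, smul_smul, smul_add]
    match_scalars
    · linear_combination (Real.cos θ * (-c2 + 2) / 2) * pyth
    · linear_combination (-(Real.sin θ) * (c2 + 2) / 2) * pyth
  · rw [hT, hv3, hk2]
    simp only [map_add, map_smul, LinearMap.add_apply, LinearMap.smul_apply,
      hn11, hn12, hn21, hn22, smul_zero, smul_smul, smul_add]
    match_scalars <;> ring
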